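/- Under the time-change formula hypothesis, for every integer h ≠ 0 and real x ≥ 0: P(Θ_h > x, Θ_0 = 1) = E[Θ_{−h}^α · 1{1/Θ_{−h} > x, Θ_0 = 1, Θ_{−h} > 0}]. -/

import Mathlib

open MeasureTheory

/-- Time-change formula for the spectral tail process, as a hypothesis. -/
def TimeChangeFormula {Ω : Type*} [MeasureSpace Ω] (μ : Measure Ω)
    (Θ : ℤ → Ω → ℝ) (α : ℝ) : Prop :=
  ∀ (s t i : ℤ), s ≤ 0 → 0 ≤ t →
    ∀ f : (ℤ → ℝ) → ℝ, Measurable f → (∃ C : ℝ, ∀ y, |f y| ≤ C) →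
      (∀ y y' : (ℤ → ℝ), (∀ j ∈ Set.Icc s t, y j = y' j) → f y = f y') →
      (∀ y : ℤ → ℝ, y 0 = 0 → f y = 0) →
      ∫ ω, f (fun j => Θ (j - i) ω) ∂μ
        = ∫ ω, f (fun j => Θ j ω / |Θ i ω|) * |Θ i ω| ^ α *
            (if Θ i ω ≠ 0 then 1 else 0) ∂μ

theorem backward_representation_cond_pos
    {Ω : Type*} [MeasureSpace Ω] (μ : Measure Ω) [IsProbabilityMeasure μ]
    (Θ : ℤ → Ω → ℝ) (hmeas : ∀ t, Measurable (Θ t))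
    (α : ℝ) (hα : 0 < α)
    (hΘ0 : ∀ᵐ ω ∂μ, Θ 0 ω = 1 ∨ Θ 0 ω = -1)
    (hTC : TimeChangeFormula μ Θ α) :
    ∀ h : ℤ, h ≠ 0 → ∀ x : ℝ, 0 ≤ x →
      (μ {ω | x < Θ h ω ∧ Θ 0 ω = 1}).toReal
        = ∫ ω, |Θ (-h) ω| ^ α *
            (if x < 1 / Θ (-h) ω ∧ Θ 0 ω = 1 ∧ 0 < Θ (-h) ω then 1 else 0) ∂μ := by
  classical
  intro h hh x hx
  set f : (ℤ → ℝ) → ℝ := fun y => if x < y 0 ∧ y (-h) = 1 then 1 else 0 with hf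
  have hfmeas : Measurable f := by
    have h1 : MeasurableSet {y : ℤ → ℝ | x < y 0} :=
      measurableSet_lt measurable_const (measurable_pi_apply 0)
    have h2 : MeasurableSet {y : ℤ → ℝ | y (-h) = 1} :=
      (measurable_pi_apply (-h)) (measurableSet_singleton 1)
    exact Measurable.ite (h1.inter h2) measurable_const measurable_const
  have hbd : ∃ C : ℝ, ∀ y, |f y| ≤ C :=
    ⟨1, fun y => by by_cases hy : x < y 0 ∧ y (-h) = 1 <;> simp [hf, hy]⟩
  have hdep : ∀ y y' : (ℤ → ℝ), (∀ j ∈ Set.Icc (-|h|) |h|, y j = y' j) → f y = f y' := by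
    intro y y' hyy
    have h0 : y 0 = y' 0 := hyy 0 ⟨neg_nonpos.mpr (abs_nonneg h), abs_nonneg h⟩
    have hmh : y (-h) = y' (-h) :=
      hyy (-h) ⟨neg_le_neg (le_abs_self h), neg_le.mp (neg_abs_le h)⟩
    simp [hf, h0, hmh]
  have hvan : ∀ y : ℤ → ℝ, y 0 = 0 → f y = 0 := by
    intro y hy
    simp [hf, hy, not_lt.mpr hx]
  have key := hTC (-|h|) |h| (-h) (neg_nonpos.mpr (abs_nonneg h)) (abs_nonneg h)
    f hfmeas hbd hdep hvan
  have hL : ∫ ω, f (fun j => Θ (j - (-h)) ω) ∂μ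
      = (μ {ω | x < Θ h ω ∧ Θ 0 ω = 1}).toReal := by
    have hSm : MeasurableSet {ω | x < Θ h ω ∧ Θ 0 ω = 1} :=
      (measurableSet_lt measurable_const (hmeas h)).inter
        ((hmeas 0) (measurableSet_singleton 1))
    rw [show (μ {ω | x < Θ h ω ∧ Θ 0 ω = 1}).toReal = μ.real {ω | x < Θ h ω ∧ Θ 0 ω = 1} from rfl,
      ← integral_indicator_one hSm]
    refine integral_congr_ae (Filter.Eventually.of_forall fun ω => ?_)
    simp [hf, Set.indicator_apply, sub_neg_eq_add]
  have hR : ∫ ω, f (fun j => Θ j ω / |Θ (-h) ω|) * |Θ (-h) ω| ^ α *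
        (if Θ (-h) ω ≠ 0 then 1 else 0) ∂μ
      = ∫ ω, |Θ (-h) ω| ^ α *
          (if x < 1 / Θ (-h) ω ∧ Θ 0 ω = 1 ∧ 0 < Θ (-h) ω then 1 else 0) ∂μ := by
    refine integral_congr_ae ?_
    filter_upwards [hΘ0] with ω hω
    by_cases ha : Θ (-h) ω = 0
    · simp [hf, ha]
    · rcases lt_or_gt_of_ne ha with hneg | hpos
      · have h1 : Θ (-h) ω / |Θ (-h) ω| = -1 := by
          rw [abs_of_neg hneg]
          rw [div_neg, div_self ha]
        simp only [hf, h1, ha, not_lt.mpr hneg.le, ne_eq, not_false_eq_true, if_true,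
          mul_one, and_false, if_false, mul_zero]
        by_cases hc : x < Θ 0 ω / |Θ (-h) ω| ∧ (-1 : ℝ) = 1
        · exact absurd hc.2 (by norm_num)
        · simp [hc]
      · have habs : |Θ (-h) ω| = Θ (-h) ω := abs_of_pos hpos
        have h1 : Θ (-h) ω / |Θ (-h) ω| = 1 := by rw [habs]; exact div_self ha
        rcases hω with hb | hb
        · by_cases hc : x < 1 / Θ (-h) ω <;>
            simp [hf, h1, habs, hb, ha, hpos, hc, mul_comm]
        · have hneg1 : ¬ x < (-1 : ℝ) / |Θ (-h) ω| := by
            rw [habs]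
            have hlt : (-1 : ℝ) / Θ (-h) ω < 0 :=
              div_neg_of_neg_of_pos (by norm_num) hpos
            exact not_lt.mpr (hlt.le.trans hx)
          simp [hf, h1, hb, ha, hpos, hneg1, (by norm_num : ((-1:ℝ) = 1) = False)]
  rw [← hL, key, hR]
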